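/- arXiv:2210.11205 — 6 statements merged into one kernel-verified Lean document; each statement's English description precedes it below -/
import Mathlib

section
/- Suppose β = 0 and (P_A, M, P_B) is a time-independent solution of the adjuvant system, i.e. constants P_A, P_B ∈ ℝ and a twice continuously differentiable function M : [0,L] → ℝ satisfying: 0 = −λ_A A (P_A − κ_{A,1} M(0)/A); D_P M''(x) = 0 for all x ∈ [0,L]; 0 = λ_B A (κ_{B,1} M(L)/A − P_B); the flux boundary conditions −D_P M'(0) = λ_A A (P_A − κ_{A,1} M(0)/A) and −D_P M'(L) = λ_B A (κ_{B,1} M(L)/A − P_B); and the total-mass constraint V_A P_A + ∫_0^L M(x) dx + V_B P_B = V_A P_A^0. Then M is constant on [0,L] and P_A = κ_{A,1} V_A P_A^0 / (κ_{A,1} V_A + κ_{B,1} V_B + A L), M ≡ A P_A / κ_{A,1}, P_B = (κ_{B,1}/κ_{A,1}) P_A. -/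
/-- Uniqueness of the adjuvant steady state with `β = 0`: any time-independent
solution of the adjuvant system (zero ODE right-hand sides, `D_P M'' = 0` in
the cuticle, flux boundary conditions, and total mass `V_A P_A⁰`) is the
explicit steady state: `M` is constant on `[0,L]` and
`P_A = κ_{A,1} V_A P_A⁰ / (κ_{A,1} V_A + κ_{B,1} V_B + A L)`,
`M ≡ A P_A / κ_{A,1}`, `P_B = (κ_{B,1}/κ_{A,1}) P_A`. -/
theorem adjuvant_steady_state_unique
    (V_A V_B A L D_P lamA lamB κA1 κB1 PA0 : ℝ)
    (hVA : 0 < V_A) (hVB : 0 < V_B) (hA : 0 < A) (hL : 0 < L)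
    (hDP : 0 < D_P) (hlamA : 0 < lamA) (hlamB : 0 < lamB)
    (hκA : 0 < κA1) (hκB : 0 < κB1) (hPA0 : 0 < PA0)
    (P_A P_B : ℝ) (M : ℝ → ℝ)
    (hM : ContDiffOn ℝ 2 M (Set.Icc 0 L))
    (hodeA : (0 : ℝ) = -(lamA * A * (P_A - κA1 * M 0 / A)))
    (hpde : ∀ x ∈ Set.Icc (0 : ℝ) L,
      D_P * derivWithin (derivWithin M (Set.Icc 0 L)) (Set.Icc 0 L) x = 0)
    (hodeB : (0 : ℝ) = lamB * A * (κB1 * M L / A - P_B))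
    (hbc0 : -(D_P * derivWithin M (Set.Icc 0 L) 0) =
      lamA * A * (P_A - κA1 * M 0 / A))
    (hbcL : -(D_P * derivWithin M (Set.Icc 0 L) L) =
      lamB * A * (κB1 * M L / A - P_B))
    (hmass : V_A * P_A + (∫ x in (0 : ℝ)..L, M x) + V_B * P_B = V_A * PA0) :
    (∀ x ∈ Set.Icc (0 : ℝ) L, ∀ x' ∈ Set.Icc (0 : ℝ) L, M x = M x') ∧
    P_A = κA1 * V_A * PA0 / (κA1 * V_A + κB1 * V_B + A * L) ∧
    (∀ x ∈ Set.Icc (0 : ℝ) L, M x = A * P_A / κA1) ∧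
    P_B = (κB1 / κA1) * P_A := by
  have hLle : (0 : ℝ) ≤ L := hL.le
  have hud : UniqueDiffOn ℝ (Set.Icc (0:ℝ) L) := uniqueDiffOn_Icc hL
  -- derivWithin M is constant on Icc
  have hM' : ContDiffOn ℝ 1 (derivWithin M (Set.Icc 0 L)) (Set.Icc (0:ℝ) L) :=
    hM.derivWithin hud (by norm_num)
  have hconstd : ∀ x ∈ Set.Icc (0:ℝ) L,
      derivWithin M (Set.Icc 0 L) x = derivWithin M (Set.Icc 0 L) 0 := by
    apply constant_of_derivWithin_zero (hM'.differentiableOn one_ne_zero)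
    intro x hx
    have := hpde x (Set.mem_Icc.2 ⟨hx.1, hx.2.le⟩)
    have := mul_eq_zero.1 this
    rcases this with h | h
    · exact absurd h hDP.ne'
    · exact h
  -- derivWithin M 0 = 0
  have hd0 : derivWithin M (Set.Icc 0 L) 0 = 0 := by
    have : -(D_P * derivWithin M (Set.Icc 0 L) 0) = 0 := by
      rw [hbc0]; linarith [hodeA]
    have := neg_eq_zero.1 this
    rcases mul_eq_zero.1 this with h | h
    · exact absurd h hDP.ne'
    · exact h
  -- M constant on Icc
  have hMconst : ∀ x ∈ Set.Icc (0:ℝ) L, M x = M 0 := by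
    apply constant_of_derivWithin_zero (hM.differentiableOn (by norm_num))
    intro x hx
    rw [hconstd x (Set.mem_Icc.2 ⟨hx.1, hx.2.le⟩), hd0]
  have hML : M L = M 0 := hMconst L (Set.mem_Icc.2 ⟨hLle, le_refl L⟩)
  -- relations
  have hPA : P_A = κA1 * M 0 / A := by
    have h := hodeA
    have h2 : lamA * A * (P_A - κA1 * M 0 / A) = 0 := by linarith
    rcases mul_eq_zero.1 h2 with h3 | h3
    · exact absurd h3 (by positivity)
    · linarith
  have hPB : P_B = κB1 * M 0 / A := by
    have h2 : lamB * A * (κB1 * M L / A - P_B) = 0 := by linarith [hodeB]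
    rcases mul_eq_zero.1 h2 with h3 | h3
    · exact absurd h3 (by positivity)
    · rw [← hML]; linarith
  have hM0eq : M 0 = A * P_A / κA1 := by
    rw [hPA]; field_simp
  -- integral
  have hint : (∫ x in (0:ℝ)..L, M x) = L * M 0 := by
    rw [intervalIntegral.integral_congr (g := fun _ => M 0)
      (by intro x hx; rw [Set.uIcc_of_le hLle] at hx; exact hMconst x hx)]
    simp [mul_comm]
  -- compute P_A
  have hPAval : P_A = κA1 * V_A * PA0 / (κA1 * V_A + κB1 * V_B + A * L) := by
    have hmass' : V_A * P_A + L * M 0 + V_B * P_B = V_A * PA0 := by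
      rw [← hint]; linarith
    rw [hPA] at hmass' ⊢
    rw [hPB] at hmass'
    have hden : κA1 * V_A + κB1 * V_B + A * L ≠ 0 := by positivity
    field_simp at hmass' ⊢
    linear_combination hmass'
  refine ⟨fun x hx x' hx' => by rw [hMconst x hx, hMconst x' hx'], hPAval,
    fun x hx => by rw [hMconst x hx, hM0eq], ?_⟩
  rw [hPB, hPA]; field_simp
end

section
/- Suppose η = 0, d : [0,L] → ℝ is a continuous function with d(x) > 0 for all x ∈ [0,L], and (Q_A, N, Q_B) is a time-independent solution of the active-ingredient system with diffusion coefficient d, i.e. constants Q_A, Q_B ∈ ℝ and a continuously differentiable N : [0,L] → ℝ such that x ↦ d(x) N'(x) is differentiable with (d(x) N'(x))' = 0 on [0,L], and: 0 = −μ_A A (Q_A − K_{A,1} N(0)/A); 0 = μ_B A (K_{B,1} N(L)/A − Q_B); the flux boundary conditions −d(0) N'(0) = μ_A A (Q_A − K_{A,1} N(0)/A) and −d(L) N'(L) = μ_B A (K_{B,1} N(L)/A − Q_B); and the total-mass constraint V_A Q_A + ∫_0^L N(x) dx + V_B Q_B = V_A Q_A^0. Then N is constant on [0,L] and Q_A =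 K_{A,1} V_A Q_A^0 / (K_{A,1} V_A + K_{B,1} V_B + A L), N ≡ A Q_A / K_{A,1}, Q_B = (K_{B,1}/K_{A,1}) Q_A. -/
/-- Uniqueness of the active-ingredient steady state with `η = 0` and a
spatially varying positive diffusion coefficient `d`: any time-independent
solution of the active-ingredient system (zero ODE right-hand sides,
`(d N')' = 0` in the cuticle, flux boundary conditions, and total mass
`V_A Q_A⁰`) is the explicit steady state: `N` is constant on `[0,L]` and
`Q_A = K_{A,1} V_A Q_A⁰ / (K_{A,1} V_A + K_{B,1} V_B + A L)`,
`N ≡ A Q_A / K_{A,1}`, `Q_B = (K_{B,1}/K_{A,1}) Q_A`. -/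
theorem active_ingredient_steady_state_unique
    (V_A V_B A L muA muB KA1 KB1 QA0 : ℝ)
    (hVA : 0 < V_A) (hVB : 0 < V_B) (hA : 0 < A) (hL : 0 < L)
    (hmuA : 0 < muA) (hmuB : 0 < muB)
    (hKA : 0 < KA1) (hKB : 0 < KB1) (hQA0 : 0 < QA0)
    (d : ℝ → ℝ)
    (hd_cont : ContinuousOn d (Set.Icc 0 L))
    (hd_pos : ∀ x ∈ Set.Icc (0 : ℝ) L, 0 < d x)
    (Q_A Q_B : ℝ) (N : ℝ → ℝ)
    (hN : ContDiffOn ℝ 1 N (Set.Icc 0 L))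
    (hflux_diff : DifferentiableOn ℝ
      (fun x => d x * derivWithin N (Set.Icc 0 L) x) (Set.Icc 0 L))
    (hpde : ∀ x ∈ Set.Icc (0 : ℝ) L,
      derivWithin (fun x' => d x' * derivWithin N (Set.Icc 0 L) x')
        (Set.Icc 0 L) x = 0)
    (hodeA : (0 : ℝ) = -(muA * A * (Q_A - KA1 * N 0 / A)))
    (hodeB : (0 : ℝ) = muB * A * (KB1 * N L / A - Q_B))
    (hbc0 : -(d 0 * derivWithin N (Set.Icc 0 L) 0) =
      muA * A * (Q_A - KA1 * N 0 / A))
    (hbcL : -(d L * derivWithin N (Set.Icc 0 L) L) =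
      muB * A * (KB1 * N L / A - Q_B))
    (hmass : V_A * Q_A + (∫ x in (0 : ℝ)..L, N x) + V_B * Q_B = V_A * QA0) :
    (∀ x ∈ Set.Icc (0 : ℝ) L, ∀ x' ∈ Set.Icc (0 : ℝ) L, N x = N x') ∧
    Q_A = KA1 * V_A * QA0 / (KA1 * V_A + KB1 * V_B + A * L) ∧
    (∀ x ∈ Set.Icc (0 : ℝ) L, N x = A * Q_A / KA1) ∧
    Q_B = (KB1 / KA1) * Q_A := by
  have h0mem : (0 : ℝ) ∈ Set.Icc (0 : ℝ) L := ⟨le_refl _, hL.le⟩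
  have hLmem : L ∈ Set.Icc (0 : ℝ) L := ⟨hL.le, le_refl _⟩
  -- g := d * N' is constant on Icc, equal to g 0 = 0
  have hgconst := constant_of_derivWithin_zero hflux_diff
    (fun x hx => hpde x (Set.Ico_subset_Icc_self hx))
  have hg0 : d 0 * derivWithin N (Set.Icc 0 L) 0 = 0 := by
    linarith [hbc0, hodeA]
  have hgzero : ∀ x ∈ Set.Icc (0 : ℝ) L,
      d x * derivWithin N (Set.Icc 0 L) x = 0 := by
    intro x hx
    have := hgconst x hx
    simpa [hg0] using this
  have hderiv0 : ∀ x ∈ Set.Icc (0 : ℝ) L, derivWithin N (Set.Icc 0 L) x = 0 := by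
    intro x hx
    have hd := (hd_pos x hx).ne'
    have := hgzero x hx
    exact (mul_eq_zero.mp this).resolve_left hd
  have hNdiff : DifferentiableOn ℝ N (Set.Icc 0 L) :=
    hN.differentiableOn one_ne_zero
  have hNconst : ∀ x ∈ Set.Icc (0 : ℝ) L, N x = N 0 :=
    constant_of_derivWithin_zero hNdiff
      (fun x hx => hderiv0 x (Set.Ico_subset_Icc_self hx))
  set c := N 0 with hc
  have hNL : N L = c := hNconst L hLmem
  -- integral
  have hint : (∫ x in (0 : ℝ)..L, N x) = L * c := by
    rw [intervalIntegral.integral_congr (g := fun _ => c)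
      (by intro x hx; rw [Set.uIcc_of_le hL.le] at hx; exact hNconst x hx)]
    simp [mul_comm]
  -- Q_A and Q_B in terms of c
  have hQA : Q_A = KA1 * c / A := by
    have h := hodeA
    have hmuAA : muA * A ≠ 0 := by positivity
    have : muA * A * (Q_A - KA1 * c / A) = 0 := by linarith [h]
    have := (mul_eq_zero.mp this).resolve_left hmuAA
    linarith
  have hQB : Q_B = KB1 * c / A := by
    have hmuBA : muB * A ≠ 0 := by positivity
    have : muB * A * (KB1 * c / A - Q_B) = 0 := by rw [← hNL]; linarith [hodeB]
    have := (mul_eq_zero.mp this).resolve_left hmuBA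
    linarith
  -- solve for c
  have hD : KA1 * V_A + KB1 * V_B + A * L ≠ 0 := by positivity
  have hAne : A ≠ 0 := hA.ne'
  have hcval : c = A * V_A * QA0 / (KA1 * V_A + KB1 * V_B + A * L) := by
    rw [hint, hQA, hQB] at hmass
    field_simp at hmass ⊢
    linarith
  have hQAval : Q_A = KA1 * V_A * QA0 / (KA1 * V_A + KB1 * V_B + A * L) := by
    rw [hQA, hcval]; field_simp
  refine ⟨fun x hx x' hx' => by rw [hNconst x hx, hNconst x' hx'], hQAval, ?_, ?_⟩
  · intro x hx
    rw [hNconst x hx, hQA]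
    field_simp
  · rw [hQB, hQA]
    field_simp
end

section
/- Let P_A, P_B : ℝ → ℝ be differentiable and M : ℝ × [0,L] → ℝ be such that for each t the map x ↦ M(t,x) is twice continuously differentiable on [0,L], for each x the map t ↦ M(t,x) is differentiable with ∂M/∂t jointly continuous, and suppose they satisfy: V_A P_A'(t) = −λ_A A (P_A(t) − κ_{A,1} M(t,0)/A); ∂M/∂t(t,x) = D_P ∂²M/∂x²(t,x) for all x ∈ [0,L]; V_B P_B'(t) = λ_B A (κ_{B,1} M(t,L)/A − P_B(t)) − β V_B P_B(t); −D_P ∂M/∂x(t,0) = λ_A A (P_A(t) − κ_{A,1} M(t,0)/A); and −D_P ∂M/∂x(t,L) = λ_B A (κ_{B,1} M(t,L)/A − P_B(t)). Then the total mass W(t) = V_A P_A(t) + ∫_0^L M(t,x) dx + V_B P_B(t) is differentiable with W'(t) = −β V_B P_B(t) for every t. -/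
open MeasureTheory Set intervalIntegral Metric Interval


/-- Mass balance for the adjuvant hybrid ODE–PDE system: if `(P_A, M, P_B)`
solves the droplet ODE, the diffusion equation in the cuticle, the tissue ODE
with loss rate `β`, and the flux boundary conditions, then the total mass
`W(t) = V_A P_A(t) + ∫₀ᴸ M(t,x) dx + V_B P_B(t)` is differentiable with
`W'(t) = −β V_B P_B(t)` for every `t`. -/
theorem adjuvant_mass_balance
    (V_A V_B A L D_P lamA lamB κA1 κB1 β : ℝ)
    (hVA : 0 < V_A) (hVB : 0 < V_B) (hA : 0 < A) (hL : 0 < L)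
    (hDP : 0 < D_P) (hlamA : 0 < lamA) (hlamB : 0 < lamB)
    (hκA : 0 < κA1) (hκB : 0 < κB1) (hβ : 0 ≤ β)
    (P_A P_B : ℝ → ℝ) (M : ℝ → ℝ → ℝ)
    (hPA : Differentiable ℝ P_A) (hPB : Differentiable ℝ P_B)
    (hMx : ∀ t : ℝ, ContDiffOn ℝ 2 (M t) (Set.Icc 0 L))
    (hMt : ∀ x ∈ Set.Icc (0 : ℝ) L, ∀ t : ℝ,
      DifferentiableAt ℝ (fun s => M s x) t)
    (hMt_cont : ContinuousOn
      (fun p : ℝ × ℝ => deriv (fun s => M s p.2) p.1)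
      (Set.univ ×ˢ Set.Icc 0 L))
    (hodeA : ∀ t : ℝ, V_A * deriv P_A t =
      -(lamA * A * (P_A t - κA1 * M t 0 / A)))
    (hpde : ∀ t : ℝ, ∀ x ∈ Set.Icc (0 : ℝ) L,
      deriv (fun s => M s x) t =
        D_P * derivWithin (derivWithin (M t) (Set.Icc 0 L)) (Set.Icc 0 L) x)
    (hodeB : ∀ t : ℝ, V_B * deriv P_B t =
      lamB * A * (κB1 * M t L / A - P_B t) - β * V_B * P_B t)
    (hbc0 : ∀ t : ℝ, -(D_P * derivWithin (M t) (Set.Icc 0 L) 0) =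
      lamA * A * (P_A t - κA1 * M t 0 / A))
    (hbcL : ∀ t : ℝ, -(D_P * derivWithin (M t) (Set.Icc 0 L) L) =
      lamB * A * (κB1 * M t L / A - P_B t)) :
    ∀ t : ℝ, HasDerivAt
      (fun s => V_A * P_A s + (∫ x in (0 : ℝ)..L, M s x) + V_B * P_B s)
      (-(β * V_B * P_B t)) t := by
  intro t₀
  have hL' : (0:ℝ) ≤ L := hL.le
  have hIoc : Ι (0:ℝ) L ⊆ Icc 0 L := by
    rw [uIoc_of_le hL']; exact Ioc_subset_Icc_self
  have hUD : UniqueDiffOn ℝ (Icc (0:ℝ) L) := uniqueDiffOn_Icc hL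
  -- step 1: derivative of the integral term
  set F' : ℝ → ℝ → ℝ := fun s x => deriv (fun u => M u x) s with hF'
  -- bound on compact set
  obtain ⟨C, hC⟩ := (isCompact_Icc.prod isCompact_Icc :
      IsCompact ((Icc (t₀ - 1) (t₀ + 1)) ×ˢ Icc (0:ℝ) L)).exists_bound_of_continuousOn
    (hMt_cont.mono (by intro p hp; exact ⟨trivial, hp.2⟩))
  have key : HasDerivAt (fun s => ∫ x in (0:ℝ)..L, M s x)
      (∫ x in (0:ℝ)..L, F' t₀ x) t₀ := by
    have hmeas : ∀ᶠ s in nhds t₀, AEStronglyMeasurable (M s)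
        ((volume : Measure ℝ).restrict (Ι (0:ℝ) L)) := by
      filter_upwards with s
      exact (((hMx s).continuousOn).mono hIoc).aestronglyMeasurable
        (measurableSet_uIoc)
    have hint : IntervalIntegrable (M t₀) volume 0 L :=
      ((hMx t₀).continuousOn.mono (by rw [uIcc_of_le hL'])).intervalIntegrable
    have hF'cont : ContinuousOn (F' t₀) (Icc 0 L) := by
      have : ContinuousOn (fun x => (fun p : ℝ × ℝ => deriv (fun u => M u p.2) p.1)
          (t₀, x)) (Icc 0 L) := hMt_cont.comp
        (Continuous.continuousOn (by fun_prop)) (fun x hx => ⟨trivial, hx⟩)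
      exact this
    have hF'meas : AEStronglyMeasurable (F' t₀)
        ((volume : Measure ℝ).restrict (Ι (0:ℝ) L)) :=
      (hF'cont.mono hIoc).aestronglyMeasurable measurableSet_uIoc
    have hbound : ∀ᵐ x ∂(volume : Measure ℝ), x ∈ Ι (0:ℝ) L →
        ∀ s ∈ ball t₀ 1, ‖F' s x‖ ≤ C := by
      filter_upwards with x hx s hs
      have hs' := abs_lt.1 (by simpa [Real.dist_eq] using hs : |s - t₀| < 1)
      exact hC (s, x) ⟨⟨by linarith [hs'.1], by linarith [hs'.2]⟩, hIoc hx⟩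
    have hbint : IntervalIntegrable (fun _ : ℝ => C) volume 0 L :=
      intervalIntegrable_const
    have hdiff : ∀ᵐ x ∂(volume : Measure ℝ), x ∈ Ι (0:ℝ) L →
        ∀ s ∈ ball t₀ 1, HasDerivAt (fun u => M u x) (F' s x) s := by
      filter_upwards with x hx s _
      exact (hMt x (hIoc hx) s).hasDerivAt
    exact (intervalIntegral.hasDerivAt_integral_of_dominated_loc_of_deriv_le
      (ball_mem_nhds t₀ one_pos) hmeas hint hF'meas hbound hbint hdiff).2
  -- step 2: compute the integral of F' t₀ via FTC
  set g : ℝ → ℝ := fun x => derivWithin (M t₀) (Icc 0 L) x with hg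
  have hgC1 : ContDiffOn ℝ 1 g (Icc 0 L) :=
    (hMx t₀).derivWithin hUD (by norm_num)
  have hgcont : ContinuousOn g (Icc 0 L) := hgC1.continuousOn
  have hg'cont : ContinuousOn (fun x => derivWithin g (Icc 0 L) x) (Icc 0 L) := by
    have := hgC1.continuousOn_derivWithin hUD (le_refl 1)
    exact this
  have hFTC : (∫ x in (0:ℝ)..L, derivWithin g (Icc 0 L) x) = g L - g 0 := by
    apply integral_eq_sub_of_hasDeriv_right_of_le hL' hgcont
    · intro x hx
      have hmem : Icc (0:ℝ) L ∈ nhds x := Icc_mem_nhds hx.1 hx.2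
      have hd : HasDerivWithinAt g (derivWithin g (Icc 0 L) x) (Icc 0 L) x :=
        ((hgC1.differentiableOn one_ne_zero) x (Ioo_subset_Icc_self hx)).hasDerivWithinAt
      exact (hd.hasDerivAt hmem).hasDerivWithinAt
    · exact (hg'cont.mono (by rw [uIcc_of_le hL'])).intervalIntegrable
  have hintval : (∫ x in (0:ℝ)..L, F' t₀ x) = D_P * (g L - g 0) := by
    rw [← hFTC, ← intervalIntegral.integral_const_mul]
    apply intervalIntegral.integral_congr
    intro x hx
    rw [uIcc_of_le hL'] at hx
    exact hpde t₀ x hx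
  rw [hintval] at key
  -- step 3: combine
  have h1 : HasDerivAt (fun s => V_A * P_A s) (V_A * deriv P_A t₀) t₀ :=
    ((hPA t₀).hasDerivAt).const_mul V_A
  have h2 : HasDerivAt (fun s => V_B * P_B s) (V_B * deriv P_B t₀) t₀ :=
    ((hPB t₀).hasDerivAt).const_mul V_B
  have := (h1.add key).add h2
  refine this.congr_deriv ?_
  have e0 := hbc0 t₀
  have eL := hbcL t₀
  have eA := hodeA t₀
  have eB := hodeB t₀
  have hgL : D_P * g L = D_P * derivWithin (M t₀) (Icc 0 L) L := rfl
  have hg0 : D_P * g 0 = D_P * derivWithin (M t₀) (Icc 0 L) 0 := rfl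
  linarith
end

section
/- Let Q_A, Q_B : ℝ → ℝ be differentiable, let g : ℝ × [0,L] → ℝ be continuous with g(t,x) > 0 (representing the concentration-dependent diffusion coefficient D_Q(M_1(t,x))), and let N : ℝ × [0,L] → ℝ be such that for each t the map x ↦ N(t,x) is continuously differentiable on [0,L] with x ↦ g(t,x) ∂N/∂x(t,x) continuously differentiable, for each x the map t ↦ N(t,x) is differentiable with ∂N/∂t jointly continuous, and suppose they satisfy: V_A Q_A'(t) = −μ_A A (Q_A(t) − K_{A,1} N(t,0)/A); ∂N/∂t(t,x) = ∂/∂x ( g(t,x) ∂N/∂x(t,x) ) for all x ∈ [0,L]; V_B Q_B'(t) = μ_B A (K_{B,1} N(t,L)/A − Q_B(t)) − η V_B Q_B(t); −g(t,0) ∂N/∂x(t,0) = μ_A A (Q_A(t) − K_{A,1} N(t,0)/A); and −g(t,L) ∂N/∂x(t,L) = μ_B A (K_{B,1} N(t,L)/A − Q_B(t)). Then the total mass W(t) = V_A Q_A(t) + ∫_0^L N(t,x) dx + V_B Q_B(t) is differentiable with W'(t) = −η V_B Q_B(t) for every t. -/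
/-- Mass balance for the active-ingredient hybrid ODE–PDE system with a
concentration-dependent diffusion coefficient `g(t,x) > 0`: if
`(Q_A, N, Q_B)` solves the droplet ODE, the diffusion equation in flux form
`∂N/∂t = ∂/∂x (g ∂N/∂x)` in the cuticle, the tissue ODE with loss rate `η`,
and the flux boundary conditions, then the total mass
`W(t) = V_A Q_A(t) + ∫₀ᴸ N(t,x) dx + V_B Q_B(t)` is differentiable with
`W'(t) = −η V_B Q_B(t)` for every `t`. -/
theorem active_ingredient_mass_balance
    (V_A V_B A L muA muB KA1 KB1 η : ℝ)
    (hVA : 0 < V_A) (hVB : 0 < V_B) (hA : 0 < A) (hL : 0 < L)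
    (hmuA : 0 < muA) (hmuB : 0 < muB)
    (hKA : 0 < KA1) (hKB : 0 < KB1) (hη : 0 ≤ η)
    (Q_A Q_B : ℝ → ℝ) (g N : ℝ → ℝ → ℝ)
    (hQA : Differentiable ℝ Q_A) (hQB : Differentiable ℝ Q_B)
    (hg_cont : ContinuousOn (fun p : ℝ × ℝ => g p.1 p.2)
      (Set.univ ×ˢ Set.Icc 0 L))
    (hg_pos : ∀ t : ℝ, ∀ x ∈ Set.Icc (0 : ℝ) L, 0 < g t x)
    (hNx : ∀ t : ℝ, ContDiffOn ℝ 1 (N t) (Set.Icc 0 L))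
    (hflux : ∀ t : ℝ, ContDiffOn ℝ 1
      (fun x => g t x * derivWithin (N t) (Set.Icc 0 L) x) (Set.Icc 0 L))
    (hNt : ∀ x ∈ Set.Icc (0 : ℝ) L, ∀ t : ℝ,
      DifferentiableAt ℝ (fun s => N s x) t)
    (hNt_cont : ContinuousOn
      (fun p : ℝ × ℝ => deriv (fun s => N s p.2) p.1)
      (Set.univ ×ˢ Set.Icc 0 L))
    (hodeA : ∀ t : ℝ, V_A * deriv Q_A t =
      -(muA * A * (Q_A t - KA1 * N t 0 / A)))
    (hpde : ∀ t : ℝ, ∀ x ∈ Set.Icc (0 : ℝ) L,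
      deriv (fun s => N s x) t =
        derivWithin (fun x' => g t x' * derivWithin (N t) (Set.Icc 0 L) x')
          (Set.Icc 0 L) x)
    (hodeB : ∀ t : ℝ, V_B * deriv Q_B t =
      muB * A * (KB1 * N t L / A - Q_B t) - η * V_B * Q_B t)
    (hbc0 : ∀ t : ℝ, -(g t 0 * derivWithin (N t) (Set.Icc 0 L) 0) =
      muA * A * (Q_A t - KA1 * N t 0 / A))
    (hbcL : ∀ t : ℝ, -(g t L * derivWithin (N t) (Set.Icc 0 L) L) =
      muB * A * (KB1 * N t L / A - Q_B t)) :
    ∀ t : ℝ, HasDerivAt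
      (fun s => V_A * Q_A s + (∫ x in (0 : ℝ)..L, N s x) + V_B * Q_B s)
      (-(η * V_B * Q_B t)) t := by
  intro t
  have hle : (0:ℝ) ≤ L := hL.le
  have huIcc : Set.uIcc (0:ℝ) L = Set.Icc 0 L := Set.uIcc_of_le hle
  have huIoc : Set.uIoc (0:ℝ) L = Set.Ioc 0 L := Set.uIoc_of_le hle
  have hUD : UniqueDiffOn ℝ (Set.Icc (0:ℝ) L) := uniqueDiffOn_Icc hL
  set F : ℝ → ℝ := fun x => g t x * derivWithin (N t) (Set.Icc 0 L) x with hFdef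
  -- bound on time derivative near t
  obtain ⟨C, hC⟩ : ∃ C, ∀ p ∈ (Set.Icc (t-1) (t+1)) ×ˢ (Set.Icc (0:ℝ) L),
      ‖deriv (fun s => N s p.2) p.1‖ ≤ C := by
    have hK : IsCompact ((Set.Icc (t-1) (t+1)) ×ˢ (Set.Icc (0:ℝ) L)) :=
      isCompact_Icc.prod isCompact_Icc
    have hcont : ContinuousOn (fun p : ℝ × ℝ => deriv (fun s => N s p.2) p.1)
        ((Set.Icc (t-1) (t+1)) ×ˢ (Set.Icc (0:ℝ) L)) :=
      hNt_cont.mono (fun p hp => ⟨trivial, hp.2⟩)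
    exact hK.exists_bound_of_continuousOn hcont
  -- differentiation under the integral sign
  have hsub : Set.uIoc (0:ℝ) L ⊆ Set.Icc 0 L := by
    rw [huIoc]; exact Set.Ioc_subset_Icc_self
  have hderint : HasDerivAt (fun s => ∫ x in (0:ℝ)..L, N s x)
      (∫ x in (0:ℝ)..L, deriv (fun s => N s x) t) t := by
    have h1 : ∀ᶠ s in nhds t, MeasureTheory.AEStronglyMeasurable (fun x => N s x)
        (MeasureTheory.volume.restrict (Set.uIoc (0:ℝ) L)) := by
      filter_upwards with s
      exact ((hNx s).continuousOn.mono hsub).aestronglyMeasurable measurableSet_uIoc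
    have h2 : IntervalIntegrable (fun x => N t x) MeasureTheory.volume 0 L :=
      ((hNx t).continuousOn.mono (by rw [huIcc])).intervalIntegrable
    have h3 : MeasureTheory.AEStronglyMeasurable (fun x => deriv (fun u => N u x) t)
        (MeasureTheory.volume.restrict (Set.uIoc (0:ℝ) L)) := by
      have hc : ContinuousOn (fun x => deriv (fun u => N u x) t) (Set.Icc (0:ℝ) L) :=
        hNt_cont.comp (f := fun x : ℝ => ((t : ℝ), x))
          (Continuous.continuousOn (by continuity))
          (fun x hx => ⟨trivial, hx⟩)
      exact (hc.mono hsub).aestronglyMeasurable measurableSet_uIoc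
    have h4 : ∀ᵐ x ∂(MeasureTheory.volume : MeasureTheory.Measure ℝ),
        x ∈ Set.uIoc (0:ℝ) L → ∀ s ∈ Metric.ball t 1,
          ‖deriv (fun u => N u x) s‖ ≤ C := by
      filter_upwards with x hx s hs
      refine hC (s, x) ⟨?_, hsub hx⟩
      have := abs_lt.1 (by simpa [Real.dist_eq] using hs)
      constructor <;> linarith [this.1, this.2]
    have h5 : IntervalIntegrable (fun _ : ℝ => C) MeasureTheory.volume 0 L :=
      intervalIntegrable_const
    have h6 : ∀ᵐ x ∂(MeasureTheory.volume : MeasureTheory.Measure ℝ),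
        x ∈ Set.uIoc (0:ℝ) L → ∀ s ∈ Metric.ball t 1,
          HasDerivAt (fun u => N u x) (deriv (fun u => N u x) s) s := by
      filter_upwards with x hx s _
      exact (hNt x (hsub hx) s).hasDerivAt
    exact (intervalIntegral.hasDerivAt_integral_of_dominated_loc_of_deriv_le
      (F := fun s x => N s x) (F' := fun s x => deriv (fun u => N u x) s)
      (Metric.ball_mem_nhds t one_pos) h1 h2 h3 h4 h5 h6).2
  -- FTC: integral of time derivative equals flux difference
  have hFcont : ContinuousOn F (Set.Icc 0 L) := (hflux t).continuousOn
  have hF'cont : ContinuousOn (derivWithin F (Set.Icc 0 L)) (Set.Icc 0 L) :=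
    (hflux t).continuousOn_derivWithin hUD le_rfl
  have hFTC : (∫ x in (0:ℝ)..L, derivWithin F (Set.Icc 0 L) x) = F L - F 0 := by
    refine intervalIntegral.integral_eq_sub_of_hasDeriv_right_of_le hle hFcont ?_
      ((hF'cont.mono (by rw [huIcc])).intervalIntegrable)
    intro x hx
    have hmem : Set.Icc (0:ℝ) L ∈ nhds x := Icc_mem_nhds hx.1 hx.2
    have h1 : HasDerivWithinAt F (derivWithin F (Set.Icc 0 L) x) (Set.Icc 0 L) x :=
      (((hflux t).differentiableOn one_ne_zero) x ⟨hx.1.le, hx.2.le⟩).hasDerivWithinAt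
    exact (h1.hasDerivAt hmem).hasDerivWithinAt
  have hint_eq : (∫ x in (0:ℝ)..L, deriv (fun s => N s x) t) = F L - F 0 := by
    rw [← hFTC]
    refine intervalIntegral.integral_congr ?_
    intro x hx
    rw [huIcc] at hx
    exact hpde t x hx
  -- combine
  have hQA' : HasDerivAt Q_A (deriv Q_A t) t := (hQA t).hasDerivAt
  have hQB' : HasDerivAt Q_B (deriv Q_B t) t := (hQB t).hasDerivAt
  have hW : HasDerivAt
      (fun s => V_A * Q_A s + (∫ x in (0:ℝ)..L, N s x) + V_B * Q_B s)
      (V_A * deriv Q_A t + (∫ x in (0:ℝ)..L, deriv (fun s => N s x) t)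
        + V_B * deriv Q_B t) t :=
    ((hQA'.const_mul V_A).add hderint).add (hQB'.const_mul V_B)
  have heq : V_A * deriv Q_A t + (∫ x in (0:ℝ)..L, deriv (fun s => N s x) t)
      + V_B * deriv Q_B t = -(η * V_B * Q_B t) := by
    rw [hint_eq]
    have h0 := hbc0 t
    have hLbc := hbcL t
    have hA' := hodeA t
    have hB' := hodeB t
    simp only [hFdef]
    linarith
  rw [← heq]
  exact hW
end

section
/- Under the hypotheses of the adjuvant mass-balance identity with β = 0, the total mass W(t) = V_A P_A(t) + ∫_0^L M(t,x) dx + V_B P_B(t) is constant in time; in particular, if the initial data satisfy P_A(0) = P_A^0, M(0,x) = 0 for all x ∈ [0,L], and P_B(0) = 0, then W(t) = V_A P_A^0 for all t ≥ 0. -/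
/-- Conservation of adjuvant mass when `β = 0`: under the hypotheses of the
adjuvant mass-balance identity, the total mass
`W(t) = V_A P_A(t) + ∫₀ᴸ M(t,x) dx + V_B P_B(t)` is constant in time; in
particular, if `P_A(0) = P_A⁰`, `M(0,·) ≡ 0` on `[0,L]` and `P_B(0) = 0`,
then `W(t) = V_A P_A⁰` for all `t ≥ 0`. -/
theorem adjuvant_mass_conservation
    (V_A V_B A L D_P lamA lamB κA1 κB1 β PA0 : ℝ)
    (hVA : 0 < V_A) (hVB : 0 < V_B) (hA : 0 < A) (hL : 0 < L)
    (hDP : 0 < D_P) (hlamA : 0 < lamA) (hlamB : 0 < lamB)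
    (hκA : 0 < κA1) (hκB : 0 < κB1) (hβ : β = 0) (hPA0 : 0 < PA0)
    (P_A P_B : ℝ → ℝ) (M : ℝ → ℝ → ℝ)
    (hPA : Differentiable ℝ P_A) (hPB : Differentiable ℝ P_B)
    (hMx : ∀ t : ℝ, ContDiffOn ℝ 2 (M t) (Set.Icc 0 L))
    (hMt : ∀ x ∈ Set.Icc (0 : ℝ) L, ∀ t : ℝ,
      DifferentiableAt ℝ (fun s => M s x) t)
    (hMt_cont : ContinuousOn
      (fun p : ℝ × ℝ => deriv (fun s => M s p.2) p.1)
      (Set.univ ×ˢ Set.Icc 0 L))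
    (hodeA : ∀ t : ℝ, V_A * deriv P_A t =
      -(lamA * A * (P_A t - κA1 * M t 0 / A)))
    (hpde : ∀ t : ℝ, ∀ x ∈ Set.Icc (0 : ℝ) L,
      deriv (fun s => M s x) t =
        D_P * derivWithin (derivWithin (M t) (Set.Icc 0 L)) (Set.Icc 0 L) x)
    (hodeB : ∀ t : ℝ, V_B * deriv P_B t =
      lamB * A * (κB1 * M t L / A - P_B t) - β * V_B * P_B t)
    (hbc0 : ∀ t : ℝ, -(D_P * derivWithin (M t) (Set.Icc 0 L) 0) =
      lamA * A * (P_A t - κA1 * M t 0 / A))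
    (hbcL : ∀ t : ℝ, -(D_P * derivWithin (M t) (Set.Icc 0 L) L) =
      lamB * A * (κB1 * M t L / A - P_B t)) :
    (∀ t₁ t₂ : ℝ,
      V_A * P_A t₁ + (∫ x in (0 : ℝ)..L, M t₁ x) + V_B * P_B t₁ =
      V_A * P_A t₂ + (∫ x in (0 : ℝ)..L, M t₂ x) + V_B * P_B t₂) ∧
    ((P_A 0 = PA0 ∧ (∀ x ∈ Set.Icc (0 : ℝ) L, M 0 x = 0) ∧ P_B 0 = 0) →
      ∀ t : ℝ, 0 ≤ t →
        V_A * P_A t + (∫ x in (0 : ℝ)..L, M t x) + V_B * P_B t =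
          V_A * PA0) := by
  have hud : UniqueDiffOn ℝ (Set.Icc (0:ℝ) L) := uniqueDiffOn_Icc hL
  have huIcc : Set.uIcc (0:ℝ) L = Set.Icc 0 L := Set.uIcc_of_le hL.le
  have huIoc : Set.uIoc (0:ℝ) L = Set.Ioc 0 L := Set.uIoc_of_le hL.le
  set F' : ℝ → ℝ → ℝ := fun t x => deriv (fun s => M s x) t with hF'def
  -- spatial integral of time derivative
  have key : ∀ t : ℝ, (∫ x in (0:ℝ)..L, F' t x) =
      lamA * A * (P_A t - κA1 * M t 0 / A)
        - lamB * A * (κB1 * M t L / A - P_B t) := by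
    intro t
    set g := derivWithin (M t) (Set.Icc (0:ℝ) L) with hgdef
    have hg : ContDiffOn ℝ 1 g (Set.Icc 0 L) :=
      (hMx t).derivWithin hud (by norm_num)
    have hgc : ContinuousOn g (Set.Icc 0 L) := hg.continuousOn
    have hg'c : ContinuousOn (derivWithin g (Set.Icc 0 L)) (Set.Icc 0 L) :=
      hg.continuousOn_derivWithin hud le_rfl
    have hftc : (∫ x in (0:ℝ)..L, derivWithin g (Set.Icc 0 L) x) = g L - g 0 := by
      refine intervalIntegral.integral_eq_sub_of_hasDeriv_right_of_le hL.le hgc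
        (fun x hx => ?_) ?_
      · have hxI : x ∈ Set.Icc (0:ℝ) L := Set.mem_Icc_of_Ioo hx
        have hd : HasDerivWithinAt g (derivWithin g (Set.Icc 0 L) x)
            (Set.Icc 0 L) x :=
          (hg.differentiableOn one_ne_zero x hxI).hasDerivWithinAt
        exact hd.mono_of_mem_nhdsWithin (Icc_mem_nhdsGT_of_mem ⟨hx.1.le, hx.2⟩)
      · refine ContinuousOn.intervalIntegrable (μ := MeasureTheory.volume) ?_
        rw [huIcc]; exact hg'c
    have hcongr : (∫ x in (0:ℝ)..L, F' t x) =
        ∫ x in (0:ℝ)..L, D_P * derivWithin g (Set.Icc 0 L) x := by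
      refine intervalIntegral.integral_congr fun x hx => ?_
      rw [huIcc] at hx
      exact hpde t x hx
    rw [hcongr, intervalIntegral.integral_const_mul, hftc]
    have h0 := hbc0 t
    have h1 := hbcL t
    rw [← hgdef] at h0 h1
    linarith
  -- derivative of total mass is zero
  have hW : ∀ t₀ : ℝ, HasDerivAt
      (fun t => V_A * P_A t + (∫ x in (0:ℝ)..L, M t x) + V_B * P_B t) 0 t₀ := by
    intro t₀
    obtain ⟨C, hC⟩ : ∃ C : ℝ, ∀ p ∈ Set.Icc (t₀-1) (t₀+1) ×ˢ Set.Icc (0:ℝ) L,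
        ‖(fun p : ℝ × ℝ => deriv (fun s => M s p.2) p.1) p‖ ≤ C := by
      refine (IsCompact.exists_bound_of_continuousOn
        ((isCompact_Icc).prod isCompact_Icc) (hMt_cont.mono ?_))
      exact Set.prod_mono (Set.subset_univ _) le_rfl
    have hmeasM : ∀ t : ℝ, MeasureTheory.AEStronglyMeasurable (M t)
        (MeasureTheory.volume.restrict (Set.uIoc (0:ℝ) L)) := by
      intro t
      rw [huIoc]
      exact ((hMx t).continuousOn.mono Set.Ioc_subset_Icc_self).aestronglyMeasurable
        measurableSet_Ioc
    have hF'cont : ContinuousOn (F' t₀) (Set.Icc 0 L) := by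
      have : ContinuousOn (fun x : ℝ => (t₀, x)) (Set.Icc 0 L) :=
        (Continuous.prodMk_right t₀).continuousOn
      exact hMt_cont.comp this (fun x hx => ⟨Set.mem_univ _, hx⟩)
    have hint := intervalIntegral.hasDerivAt_integral_of_dominated_loc_of_deriv_le
      (F := fun t x => M t x) (F' := F') (x₀ := t₀) (a := 0) (b := L)
      (bound := fun _ => C) (μ := MeasureTheory.volume) (Metric.ball_mem_nhds t₀ one_pos)
      (Filter.Eventually.of_forall hmeasM)
      (by rw [← huIcc] at hMx
          exact ((hMx t₀).continuousOn).intervalIntegrable)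
      (by rw [huIoc]
          exact (hF'cont.mono Set.Ioc_subset_Icc_self).aestronglyMeasurable
            measurableSet_Ioc)
      (MeasureTheory.ae_of_all _ (fun x hx t ht => by
        have hx' : x ∈ Set.Icc (0:ℝ) L := Set.Ioc_subset_Icc_self (huIoc ▸ hx)
        refine hC (t, x) ⟨?_, hx'⟩
        rw [Metric.mem_ball, Real.dist_eq] at ht
        constructor <;> [linarith [abs_lt.1 ht]; linarith [(abs_lt.1 ht).2]]))
      intervalIntegrable_const
      (MeasureTheory.ae_of_all _ (fun x hx t _ => by
        have hx' : x ∈ Set.Icc (0:ℝ) L := Set.Ioc_subset_Icc_self (huIoc ▸ hx)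
        exact (hMt x hx' t).hasDerivAt))
    have hintD := hint.2
    have h1 : HasDerivAt (fun t => V_A * P_A t) (V_A * deriv P_A t₀) t₀ :=
      ((hPA t₀).hasDerivAt).const_mul V_A
    have h2 : HasDerivAt (fun t => V_B * P_B t) (V_B * deriv P_B t₀) t₀ :=
      ((hPB t₀).hasDerivAt).const_mul V_B
    have hsum := (h1.add hintD).add h2
    have : V_A * deriv P_A t₀ + (∫ x in (0:ℝ)..L, F' t₀ x) + V_B * deriv P_B t₀ = 0 := by
      have hA' := hodeA t₀
      have hB' := hodeB t₀
      rw [hβ] at hB'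
      rw [key t₀]
      linarith
    rwa [this] at hsum
  have hconst : ∀ t₁ t₂ : ℝ,
      V_A * P_A t₁ + (∫ x in (0:ℝ)..L, M t₁ x) + V_B * P_B t₁ =
      V_A * P_A t₂ + (∫ x in (0:ℝ)..L, M t₂ x) + V_B * P_B t₂ := by
    intro t₁ t₂
    exact is_const_of_deriv_eq_zero (fun t => (hW t).differentiableAt)
      (fun t => (hW t).deriv) t₁ t₂
  refine ⟨hconst, ?_⟩
  rintro ⟨hA0, hM0, hB0⟩ t _
  have h0 : (∫ x in (0:ℝ)..L, M 0 x) = 0 := by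
    rw [intervalIntegral.integral_congr (g := fun _ => (0:ℝ))
      (fun x hx => hM0 x (huIcc ▸ hx))]
    simp
  have := hconst t 0
  rw [this, hA0, hB0, h0]
  ring
end

section
/- Under the hypotheses of the active-ingredient mass-balance identity with η = 0, the total mass W(t) = V_A Q_A(t) + ∫_0^L N(t,x) dx + V_B Q_B(t) is constant in time; in particular, if the initial data satisfy Q_A(0) = Q_A^0, N(0,x) = 0 for all x ∈ [0,L], and Q_B(0) = 0, then W(t) = V_A Q_A^0 for all t ≥ 0. -/
/-- Conservation of active-ingredient mass when `η = 0`: under the hypotheses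
of the active-ingredient mass-balance identity, the total mass
`W(t) = V_A Q_A(t) + ∫₀ᴸ N(t,x) dx + V_B Q_B(t)` is constant in time; in
particular, if `Q_A(0) = Q_A⁰`, `N(0,·) ≡ 0` on `[0,L]` and `Q_B(0) = 0`,
then `W(t) = V_A Q_A⁰` for all `t ≥ 0`. -/
theorem active_ingredient_mass_conservation
    (V_A V_B A L muA muB KA1 KB1 η QA0 : ℝ)
    (hVA : 0 < V_A) (hVB : 0 < V_B) (hA : 0 < A) (hL : 0 < L)
    (hmuA : 0 < muA) (hmuB : 0 < muB)
    (hKA : 0 < KA1) (hKB : 0 < KB1) (hη : η = 0) (hQA0 : 0 < QA0)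
    (Q_A Q_B : ℝ → ℝ) (g N : ℝ → ℝ → ℝ)
    (hQA : Differentiable ℝ Q_A) (hQB : Differentiable ℝ Q_B)
    (hg_cont : ContinuousOn (fun p : ℝ × ℝ => g p.1 p.2)
      (Set.univ ×ˢ Set.Icc 0 L))
    (hg_pos : ∀ t : ℝ, ∀ x ∈ Set.Icc (0 : ℝ) L, 0 < g t x)
    (hNx : ∀ t : ℝ, ContDiffOn ℝ 1 (N t) (Set.Icc 0 L))
    (hflux : ∀ t : ℝ, ContDiffOn ℝ 1
      (fun x => g t x * derivWithin (N t) (Set.Icc 0 L) x) (Set.Icc 0 L))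
    (hNt : ∀ x ∈ Set.Icc (0 : ℝ) L, ∀ t : ℝ,
      DifferentiableAt ℝ (fun s => N s x) t)
    (hNt_cont : ContinuousOn
      (fun p : ℝ × ℝ => deriv (fun s => N s p.2) p.1)
      (Set.univ ×ˢ Set.Icc 0 L))
    (hodeA : ∀ t : ℝ, V_A * deriv Q_A t =
      -(muA * A * (Q_A t - KA1 * N t 0 / A)))
    (hpde : ∀ t : ℝ, ∀ x ∈ Set.Icc (0 : ℝ) L,
      deriv (fun s => N s x) t =
        derivWithin (fun x' => g t x' * derivWithin (N t) (Set.Icc 0 L) x')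
          (Set.Icc 0 L) x)
    (hodeB : ∀ t : ℝ, V_B * deriv Q_B t =
      muB * A * (KB1 * N t L / A - Q_B t) - η * V_B * Q_B t)
    (hbc0 : ∀ t : ℝ, -(g t 0 * derivWithin (N t) (Set.Icc 0 L) 0) =
      muA * A * (Q_A t - KA1 * N t 0 / A))
    (hbcL : ∀ t : ℝ, -(g t L * derivWithin (N t) (Set.Icc 0 L) L) =
      muB * A * (KB1 * N t L / A - Q_B t)) :
    (∀ t₁ t₂ : ℝ,
      V_A * Q_A t₁ + (∫ x in (0 : ℝ)..L, N t₁ x) + V_B * Q_B t₁ =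
      V_A * Q_A t₂ + (∫ x in (0 : ℝ)..L, N t₂ x) + V_B * Q_B t₂) ∧
    ((Q_A 0 = QA0 ∧ (∀ x ∈ Set.Icc (0 : ℝ) L, N 0 x = 0) ∧ Q_B 0 = 0) →
      ∀ t : ℝ, 0 ≤ t →
        V_A * Q_A t + (∫ x in (0 : ℝ)..L, N t x) + V_B * Q_B t =
          V_A * QA0) := by
  subst hη
  have hIcc : Set.uIcc (0 : ℝ) L = Set.Icc 0 L := Set.uIcc_of_le hL.le
  have hIoc : Set.uIoc (0 : ℝ) L = Set.Ioc 0 L := Set.uIoc_of_le hL.le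
  set W : ℝ → ℝ := fun t =>
    V_A * Q_A t + (∫ x in (0 : ℝ)..L, N t x) + V_B * Q_B t with hWdef
  -- key: W has derivative 0 everywhere
  have key : ∀ t : ℝ, HasDerivAt W 0 t := by
    intro t
    -- slice continuity of the time derivative
    have hslice : ∀ s : ℝ, ContinuousOn
        (fun x => deriv (fun u => N u x) s) (Set.Icc 0 L) := by
      intro s
      have hc : ContinuousOn (fun x : ℝ => ((s : ℝ), x)) (Set.Icc 0 L) :=
        (continuous_const.prodMk continuous_id).continuousOn
      exact hNt_cont.comp hc (fun x hx => ⟨trivial, hx⟩)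
    -- bound on a compact time-space box
    obtain ⟨C, hC⟩ : ∃ C : ℝ, ∀ p ∈ Set.Icc (t - 1) (t + 1) ×ˢ Set.Icc (0:ℝ) L,
        ‖deriv (fun s => N s p.2) p.1‖ ≤ C := by
      have hK : IsCompact (Set.Icc (t - 1) (t + 1) ×ˢ Set.Icc (0:ℝ) L) :=
        (isCompact_Icc).prod isCompact_Icc
      have hcont : ContinuousOn (fun p : ℝ × ℝ => deriv (fun s => N s p.2) p.1)
          (Set.Icc (t - 1) (t + 1) ×ˢ Set.Icc (0:ℝ) L) :=
        hNt_cont.mono (Set.prod_mono (Set.subset_univ _) subset_rfl)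
      obtain ⟨C, hC⟩ := hK.exists_bound_of_continuousOn hcont
      exact ⟨C, hC⟩
    -- differentiation under the integral sign
    have hder : HasDerivAt (fun s => ∫ x in (0:ℝ)..L, N s x)
        (∫ x in (0:ℝ)..L, deriv (fun u => N u x) t) t := by
      have h := intervalIntegral.hasDerivAt_integral_of_dominated_loc_of_deriv_le
        (F := fun s x => N s x) (F' := fun s x => deriv (fun u => N u x) s)
        (x₀ := t) (a := 0) (b := L) (bound := fun _ => C) (μ := MeasureTheory.volume)
        (s := Metric.ball t 1) (Metric.ball_mem_nhds t one_pos)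
        (Filter.Eventually.of_forall (fun s => by
          refine ContinuousOn.aestronglyMeasurable ?_ measurableSet_uIoc
          exact (hNx s).continuousOn.mono (by rw [hIoc]; exact Set.Ioc_subset_Icc_self)))
        (by
          apply ContinuousOn.intervalIntegrable
          rw [hIcc]; exact (hNx t).continuousOn)
        (by
          refine ContinuousOn.aestronglyMeasurable ?_ measurableSet_uIoc
          exact (hslice t).mono (by rw [hIoc]; exact Set.Ioc_subset_Icc_self))
        (Filter.Eventually.of_forall (fun x hx => by
          intro s hs
          refine hC (s, x) ⟨?_, ?_⟩
          · have := mem_ball_iff_norm.mp hs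
            rw [Real.norm_eq_abs, abs_lt] at this
            constructor <;> linarith [this.1, this.2]
          · rw [hIoc] at hx; exact Set.Ioc_subset_Icc_self hx))
        (intervalIntegrable_const)
        (Filter.Eventually.of_forall (fun x hx => by
          intro s hs
          have hx' : x ∈ Set.Icc (0:ℝ) L := by
            rw [hIoc] at hx; exact Set.Ioc_subset_Icc_self hx
          exact (hNt x hx' s).hasDerivAt))
      exact h.2
    -- compute the integral of the time derivative via the PDE and FTC
    have hFTC : (∫ x in (0:ℝ)..L, deriv (fun u => N u x) t) =
        g t L * derivWithin (N t) (Set.Icc 0 L) L -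
        g t 0 * derivWithin (N t) (Set.Icc 0 L) 0 := by
      set f : ℝ → ℝ := fun x => g t x * derivWithin (N t) (Set.Icc 0 L) x with hf
      have hf1 : ContDiffOn ℝ 1 f (Set.Icc 0 L) := hflux t
      have hcongr : (∫ x in (0:ℝ)..L, deriv (fun u => N u x) t) =
          ∫ x in (0:ℝ)..L, derivWithin f (Set.Icc 0 L) x := by
        apply intervalIntegral.integral_congr
        intro x hx
        rw [hIcc] at hx
        exact hpde t x hx
      rw [hcongr]
      have hcontf : ContinuousOn f (Set.Icc 0 L) := hf1.continuousOn
      have hcontf' : ContinuousOn (fun x => derivWithin f (Set.Icc 0 L) x)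
          (Set.Icc 0 L) := hf1.continuousOn_derivWithin (uniqueDiffOn_Icc hL) le_rfl
      refine intervalIntegral.integral_eq_sub_of_hasDeriv_right_of_le hL.le hcontf ?_ ?_
      · intro x hx
        have hx' : x ∈ Set.Icc (0:ℝ) L := Set.Ioo_subset_Icc_self hx
        have hmem : Set.Icc (0:ℝ) L ∈ nhds x := Icc_mem_nhds hx.1 hx.2
        have hd : HasDerivWithinAt f (derivWithin f (Set.Icc 0 L) x) (Set.Icc 0 L) x :=
          ((hf1.differentiableOn one_ne_zero) x hx').hasDerivWithinAt
        exact (hd.hasDerivAt hmem).hasDerivWithinAt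
      · apply ContinuousOn.intervalIntegrable
        rw [hIcc]; exact hcontf'
    -- assemble the derivative of W
    have hA' : HasDerivAt (fun s => V_A * Q_A s) (V_A * deriv Q_A t) t :=
      ((hQA t).hasDerivAt).const_mul V_A
    have hB' : HasDerivAt (fun s => V_B * Q_B s) (V_B * deriv Q_B t) t :=
      ((hQB t).hasDerivAt).const_mul V_B
    have hsum := (hA'.add hder).add hB'
    have hzero : V_A * deriv Q_A t + (∫ x in (0:ℝ)..L, deriv (fun u => N u x) t) +
        V_B * deriv Q_B t = 0 := by
      rw [hFTC]
      have h1 := hodeA t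
      have h2 := hodeB t
      have h3 := hbc0 t
      have h4 := hbcL t
      simp only [zero_mul, mul_zero, sub_zero] at h2
      linarith
    rw [hzero] at hsum
    exact hsum
  have hconst : ∀ t₁ t₂ : ℝ, W t₁ = W t₂ := by
    intro t₁ t₂
    exact is_const_of_deriv_eq_zero (fun s => (key s).differentiableAt)
      (fun s => (key s).deriv) t₁ t₂
  refine ⟨hconst, ?_⟩
  rintro ⟨hQA0', hN0, hQB0⟩ t _
  have h0 : W 0 = V_A * QA0 := by
    have hint0 : (∫ x in (0:ℝ)..L, N 0 x) = 0 := by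
      rw [intervalIntegral.integral_congr (g := fun _ => (0:ℝ))
        (fun x hx => hN0 x (hIcc ▸ hx))]
      simp
    simp [hWdef, hQA0', hQB0, hint0]
  calc W t = W 0 := hconst t 0
    _ = V_A * QA0 := h0
end
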